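/- Let A be a von Neumann algebra (or unital C*-algebra) with trace τ, v a self-adjoint unitary, e_± the spectral projections of v for eigenvalues ±1, and E(x) = (x + vxv*)/2 = e₊xe₊ + e₋xe₋. If {(u_i, u_i*)}_{i=1}^n is a quasi-basis for E, then 1 = Σ_i u_i e₊ u_i* = Σ_i u_i e₋ u_i*, and consequently n ≥ 1/τ(e₋). -/

import Mathlib

open scoped ComplexOrder

/-- Let `A` carry a tracial state `τ`, let `v = e₊ - e₋` be a
self-adjoint unitary with spectral projections `e₊ + e₋ = 1` each of full
central support, and `E x = e₊ x e₊ + e₋ x e₋` the conditional expectation onto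
the fixed point algebra of `Ad v`.  If `{(u i, (u i)⋆)}` (with `n` elements) is
a quasi-basis for `E`, then `1 = ∑ u i * e₊ * (u i)⋆ = ∑ u i * e₋ * (u i)⋆`,
and consequently `n ≥ 1/τ(e₋)`, i.e. `1 ≤ n * τ(e₋)`. -/
theorem stmt_17 {A : Type*} [NormedRing A] [StarRing A] [CStarRing A] [NormedAlgebra ℂ A]
    [StarModule ℂ A] [CompleteSpace A] [PartialOrder A] [StarOrderedRing A] [Nontrivial A]
    (τ : A →L[ℂ] ℂ) (hτ1 : τ 1 = 1)
    (hτpos : ∀ x : A, 0 ≤ x → 0 ≤ τ x)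
    (hτtr : ∀ x y : A, τ (x * y) = τ (y * x))
    (hτfaith : ∀ x : A, 0 ≤ x → τ x = 0 → x = 0)
    (v ep em : A)
    (hsum : ep + em = 1) (hv : v = ep - em)
    (hep_idem : IsIdempotentElem ep) (hep_sa : star ep = ep)
    (hem_idem : IsIdempotentElem em) (hem_sa : star em = em)
    (hfull_p : ∀ y : A, (∀ x : A, y * (x * ep) = 0) → y = 0)
    (hfull_m : ∀ y : A, (∀ x : A, y * (x * em) = 0) → y = 0)
    (E : A → A) (hE : ∀ x : A, E x = ep * x * ep + em * x * em)
    {n : ℕ} (u : Fin n → A)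
    (hqb : ∀ x : A, x = ∑ i, u i * E (star (u i) * x)) :
    (∑ i, u i * ep * star (u i)) = 1 ∧
    (∑ i, u i * em * star (u i)) = 1 ∧
    1 ≤ (n : ℝ) * (τ em).re := by
  have hem_eq : em = 1 - ep := eq_sub_of_add_eq' hsum
  have hpm : ep * em = 0 := by
    rw [hem_eq, mul_sub, mul_one, hep_idem.eq, sub_self]
  have hmp : em * ep = 0 := by
    rw [hem_eq, sub_mul, one_mul, hep_idem.eq, sub_self]
  -- Part 1
  have h1 : (∑ i, u i * ep * star (u i)) = 1 := by
    have key : ∀ y : A, ((∑ i, u i * ep * star (u i)) - 1) * (y * ep) = 0 := by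
      intro y
      have h := hqb (y * ep)
      simp only [hE, mul_assoc, hpm, mul_zero, zero_mul, add_zero, hep_idem.eq] at h
      rw [sub_mul, Finset.sum_mul, one_mul, sub_eq_zero]
      simp only [mul_assoc]
      exact h.symm
    exact sub_eq_zero.mp (hfull_p _ key)
  -- Part 2
  have h2 : (∑ i, u i * em * star (u i)) = 1 := by
    have key : ∀ y : A, ((∑ i, u i * em * star (u i)) - 1) * (y * em) = 0 := by
      intro y
      have h := hqb (y * em)
      simp only [hE, mul_assoc, hmp, mul_zero, zero_mul, zero_add, hem_idem.eq] at h
      rw [sub_mul, Finset.sum_mul, one_mul, sub_eq_zero]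
      simp only [mul_assoc]
      exact h.symm
    exact sub_eq_zero.mp (hfull_m _ key)
  refine ⟨h1, h2, ?_⟩
  -- Part 3
  have hci : ∀ i, (0 : A) ≤ em - em * (star (u i) * (u i * em)) := by
    intro i
    have hid : em - em * (star (u i) * (u i * em))
        = ∑ k, ((if k = i then em else 0) - em * (star (u i) * (u k * em)))
            * star ((if k = i then em else 0) - em * (star (u i) * (u k * em))) := by
      have hterm : ∀ k : Fin n,
          ((if k = i then em else 0) - em * (star (u i) * (u k * em)))
            * star ((if k = i then em else 0) - em * (star (u i) * (u k * em)))
          = (if k = i then em - em * (star (u i) * (u i * em))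
                - em * (star (u i) * (u i * em)) else 0)
            + em * star (u i) * (u k * em * star (u k)) * (u i * em) := by
        intro k
        simp only [star_sub, star_mul, star_star, hem_sa, apply_ite, star_zero]
        split_ifs with hk
        all_goals {
          first | subst hk | skip
          have h5 : ∀ x : A, em * (em * x) = em * x := fun x => by
            rw [← mul_assoc, hem_idem.eq]
          noncomm_ring
          simp only [h5, hem_idem.eq]
          all_goals abel }
      rw [Finset.sum_congr rfl fun k _ => hterm k]
      rw [Finset.sum_add_distrib, Finset.sum_ite_eq' Finset.univ i
        (fun _ => em - em * (star (u i) * (u i * em)) - em * (star (u i) * (u i * em)))]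
      have : ∑ k, em * star (u i) * (u k * em * star (u k)) * (u i * em)
          = em * star (u i) * (∑ k, u k * em * star (u k)) * (u i * em) := by
        simp [Finset.sum_mul, Finset.mul_sum]
      rw [this, h2]
      simp only [Finset.mem_univ, if_true, mul_one]
      noncomm_ring
    rw [hid]
    exact Finset.sum_nonneg fun k _ => mul_star_self_nonneg _
  have htr : ∀ i, τ (em * (star (u i) * (u i * em))) = τ (u i * em * star (u i)) := by
    intro i
    have := hτtr (em * star (u i)) (u i * em)
    calc τ (em * (star (u i) * (u i * em)))
        = τ (em * star (u i) * (u i * em)) := by rw [mul_assoc]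
      _ = τ (u i * em * (em * star (u i))) := hτtr _ _
      _ = τ (u i * em * star (u i)) := by
          rw [mul_assoc, ← mul_assoc em em, hem_idem.eq, ← mul_assoc]
  have hτi : ∀ i, (0 : ℂ) ≤ τ em - τ (u i * em * star (u i)) := by
    intro i
    have := hτpos _ (hci i)
    rwa [map_sub, htr i] at this
  have hbig : (0 : ℂ) ≤ (n : ℂ) * τ em - 1 := by
    have hs : (0 : ℂ) ≤ ∑ i, (τ em - τ (u i * em * star (u i))) :=
      Finset.sum_nonneg fun i _ => hτi i
    have : ∑ i : Fin n, (τ em - τ (u i * em * star (u i)))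
        = (n : ℂ) * τ em - 1 := by
      rw [Finset.sum_sub_distrib, Finset.sum_const, Finset.card_univ, Fintype.card_fin,
        ← map_sum, h2, hτ1, nsmul_eq_mul]
    rwa [this] at hs
  have hre := (Complex.le_def.mp hbig).1
  simp only [Complex.zero_re, Complex.sub_re, Complex.mul_re, Complex.natCast_re,
    Complex.natCast_im, Complex.one_re, zero_mul, sub_zero] at hre
  linarith
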